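/- As b → −∞, E_{z∼N(0,1)}[σ(z+b)²] = (2 + o(1)) · Φ(b)/b². Concretely, the ratio of (b²+1)Φ(b) − |b|φ(b) to 2Φ(b)/b² tends to 1 as b → −∞. -/

import Mathlib

open MeasureTheory ProbabilityTheory Real Filter

noncomputable def phi (t : ℝ) : ℝ := (Real.sqrt (2 * Real.pi))⁻¹ * Real.exp (-t ^ 2 / 2)

noncomputable def Phi (b : ℝ) : ℝ := ∫ t in Set.Iic b, phi t

lemma phi_pos (t : ℝ) : 0 < phi t := by
  unfold phi
  have : 0 < Real.sqrt (2 * Real.pi) := Real.sqrt_pos.mpr (by positivity)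
  positivity

lemma continuous_phi : Continuous phi := by
  unfold phi; fun_prop

lemma integrable_phi : Integrable phi := by
  have h : Integrable (fun x : ℝ => Real.exp (-(1/2 : ℝ) * x ^ 2)) :=
    integrable_exp_neg_mul_sq (by norm_num)
  have h2 := h.const_mul (Real.sqrt (2 * Real.pi))⁻¹
  refine h2.congr ?_
  filter_upwards with x
  unfold phi
  ring_nf

lemma hasDerivAt_phi (t : ℝ) : HasDerivAt phi (-t * phi t) t := by
  have h1 : HasDerivAt (fun s : ℝ => -s ^ 2 / 2) (-t) t := by
    have := ((hasDerivAt_pow 2 t).neg).div_const 2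
    simpa using this.congr_deriv (by ring)
  have h2 := (h1.exp).const_mul (Real.sqrt (2 * Real.pi))⁻¹
  unfold phi
  exact h2.congr_deriv (by ring)

lemma hasDerivAt_Phi (b : ℝ) : HasDerivAt Phi (phi b) b := by
  have key : Phi = fun x => Phi 0 + ∫ t in (0:ℝ)..x, phi t := by
    funext x
    have := intervalIntegral.integral_Iic_sub_Iic (integrable_phi.integrableOn) (integrable_phi.integrableOn)
      (a := (0:ℝ)) (b := x)
    unfold Phi
    rw [← this]; ring
  rw [key]
  have h := intervalIntegral.integral_hasDerivAt_right
    (integrable_phi.intervalIntegrable (a := 0) (b := b))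
    (continuous_phi.stronglyMeasurableAtFilter _ _)
    continuous_phi.continuousAt
  exact h.const_add _

lemma tendsto_phi_atBot : Tendsto phi atBot (nhds 0) := by
  have hsq : Tendsto (fun b : ℝ => b ^ 2) atBot atTop := by
    have := Filter.Tendsto.atTop_mul_atTop₀ (tendsto_neg_atBot_atTop (G := ℝ)) tendsto_neg_atBot_atTop
    exact this.congr (by intro x; ring)
  have h1 : Tendsto (fun b : ℝ => -b ^ 2 / 2) atBot atBot := by
    apply Tendsto.atBot_div_const (by norm_num)
    exact tendsto_neg_atTop_atBot.comp hsq
  have h2 := (Real.tendsto_exp_atBot.comp h1).const_mul (Real.sqrt (2 * Real.pi))⁻¹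
  have : phi = fun b => (Real.sqrt (2 * Real.pi))⁻¹ * Real.exp (-b ^ 2 / 2) := rfl
  rw [this]
  simpa [Function.comp] using h2

lemma tendsto_Phi_atBot : Tendsto Phi atBot (nhds 0) := by
  have h := intervalIntegral_tendsto_integral_Iic (0:ℝ) (integrable_phi.integrableOn) tendsto_id
  have heq : ∀ a : ℝ, Phi a = Phi 0 - ∫ x in a..(0:ℝ), phi x := by
    intro a
    have := intervalIntegral.integral_Iic_sub_Iic (integrable_phi.integrableOn) (integrable_phi.integrableOn)
      (a := a) (b := (0:ℝ))
    unfold Phi; rw [← this]; ring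
  have : Tendsto (fun a => Phi 0 - ∫ x in a..(0:ℝ), phi x) atBot (nhds (Phi 0 - Phi 0)) :=
    (tendsto_const_nhds.sub h)
  simpa using this.congr (fun a => (heq a).symm)

lemma nonneg_of_deriv (f f' : ℝ → ℝ)
    (hd : ∀ x ≤ (-3:ℝ), HasDerivAt f (f' x) x)
    (hpos : ∀ x ≤ (-3:ℝ), 0 ≤ f' x)
    (hlim : Tendsto f atBot (nhds 0)) : ∀ b ≤ (-3:ℝ), 0 ≤ f b := by
  intro b hb
  have hmono : MonotoneOn f (Set.Iic (-3:ℝ)) := by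
    apply monotoneOn_of_deriv_nonneg (convex_Iic _)
    · exact fun x hx => (hd x hx).continuousAt.continuousWithinAt
    · intro x hx
      rw [interior_Iic] at hx
      exact (hd x hx.le).differentiableAt.differentiableWithinAt
    · intro x hx
      rw [interior_Iic] at hx
      rw [(hd x hx.le).deriv]
      exact hpos x hx.le
  refine le_of_tendsto hlim ?_
  filter_upwards [eventually_le_atBot b] with a ha
  exact hmono (Set.mem_Iic.2 (ha.trans hb)) (Set.mem_Iic.2 hb) ha

lemma hasDerivAt_U {b : ℝ} (hb : b ≠ 0) :
    HasDerivAt (fun x => phi x * (-x⁻¹ + x⁻¹ ^ 3 - 3 * x⁻¹ ^ 5) - Phi x)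
      (15 * phi b * b⁻¹ ^ 6) b := by
  have hinv : HasDerivAt (fun x : ℝ => x⁻¹) (-(b ^ 2)⁻¹) b := hasDerivAt_inv hb
  have hP := ((hinv.neg).add (hinv.pow 3)).sub ((hinv.pow 5).const_mul (3:ℝ))
  have h := ((hasDerivAt_phi b).mul hP).sub (hasDerivAt_Phi b)
  refine h.congr_deriv ?_
  simp only [Pi.add_apply, Pi.sub_apply, Pi.neg_apply, Pi.pow_apply, Pi.mul_apply]
  norm_num only [inv_pow]
  field_simp
  ring

lemma hasDerivAt_L {b : ℝ} (hb : b ≠ 0) :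
    HasDerivAt (fun x => Phi x - phi x * (-x⁻¹ + x⁻¹ ^ 3 - 3 * x⁻¹ ^ 5 + 15 * x⁻¹ ^ 7))
      (105 * phi b * b⁻¹ ^ 8) b := by
  have hinv : HasDerivAt (fun x : ℝ => x⁻¹) (-(b ^ 2)⁻¹) b := hasDerivAt_inv hb
  have hP := (((hinv.neg).add (hinv.pow 3)).sub ((hinv.pow 5).const_mul (3:ℝ))).add
    ((hinv.pow 7).const_mul (15:ℝ))
  have h := (hasDerivAt_Phi b).sub ((hasDerivAt_phi b).mul hP)
  refine h.congr_deriv ?_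
  simp only [Pi.add_apply, Pi.sub_apply, Pi.neg_apply, Pi.pow_apply, Pi.mul_apply]
  norm_num only [inv_pow]
  field_simp
  ring

lemma tendsto_inv' : Tendsto (fun b : ℝ => b⁻¹) atBot (nhds 0) := by
  have h := (tendsto_inv_atTop_zero.comp (tendsto_neg_atBot_atTop (G := ℝ))).neg
  have h2 : Tendsto (fun b : ℝ => b⁻¹) atBot (nhds (-0)) := by
    refine Tendsto.congr (fun b => ?_) h
    simp [Function.comp, inv_neg]
  simpa using h2

lemma U_nonneg : ∀ b ≤ (-3:ℝ), Phi b ≤ phi b * (-b⁻¹ + b⁻¹ ^ 3 - 3 * b⁻¹ ^ 5) := by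
  have h := nonneg_of_deriv (fun x => phi x * (-x⁻¹ + x⁻¹ ^ 3 - 3 * x⁻¹ ^ 5) - Phi x)
    (fun x => 15 * phi x * x⁻¹ ^ 6)
    (fun x hx => hasDerivAt_U (by linarith))
    (fun x hx => by have := (phi_pos x).le; positivity) ?_
  · intro b hb; linarith [h b hb]
  · have hP : Tendsto (fun b : ℝ => -b⁻¹ + b⁻¹ ^ 3 - 3 * b⁻¹ ^ 5) atBot
        (nhds (-(0:ℝ) + 0 ^ 3 - 3 * 0 ^ 5)) :=
      ((tendsto_inv'.neg).add (tendsto_inv'.pow 3)).sub ((tendsto_inv'.pow 5).const_mul 3)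
    have := (tendsto_phi_atBot.mul hP).sub tendsto_Phi_atBot
    simpa using this

lemma L_nonneg : ∀ b ≤ (-3:ℝ),
    phi b * (-b⁻¹ + b⁻¹ ^ 3 - 3 * b⁻¹ ^ 5 + 15 * b⁻¹ ^ 7) ≤ Phi b := by
  have h := nonneg_of_deriv
    (fun x => Phi x - phi x * (-x⁻¹ + x⁻¹ ^ 3 - 3 * x⁻¹ ^ 5 + 15 * x⁻¹ ^ 7))
    (fun x => 105 * phi x * x⁻¹ ^ 8)
    (fun x hx => hasDerivAt_L (by linarith))
    (fun x hx => by have := (phi_pos x).le; positivity) ?_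
  · intro b hb; linarith [h b hb]
  · have hP : Tendsto (fun b : ℝ => -b⁻¹ + b⁻¹ ^ 3 - 3 * b⁻¹ ^ 5 + 15 * b⁻¹ ^ 7) atBot
        (nhds (-(0:ℝ) + 0 ^ 3 - 3 * 0 ^ 5 + 15 * 0 ^ 7)) :=
      (((tendsto_inv'.neg).add (tendsto_inv'.pow 3)).sub
        ((tendsto_inv'.pow 5).const_mul 3)).add ((tendsto_inv'.pow 7).const_mul 15)
    have := tendsto_Phi_atBot.sub (tendsto_phi_atBot.mul hP)
    simpa using this

lemma aux_id1 (b p : ℝ) (hb : b ≠ 0) :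
    (b ^ 2 + 1) * (p * (-b⁻¹ + b⁻¹ ^ 3 - 3 * b⁻¹ ^ 5 + 15 * b⁻¹ ^ 7)) + b * p
      = p * (-2 * b⁻¹ ^ 3 + 12 * b⁻¹ ^ 5 + 15 * b⁻¹ ^ 7) := by
  field_simp
  ring

lemma aux_id2 (b p : ℝ) (hb : b ≠ 0) :
    (b ^ 2 + 1) * (p * (-b⁻¹ + b⁻¹ ^ 3 - 3 * b⁻¹ ^ 5)) + b * p
      = p * (-2 * b⁻¹ ^ 3 - 3 * b⁻¹ ^ 5) := by
  field_simp
  ring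

lemma aux_eq1 (b p : ℝ) (hb : b ≠ 0) (hp : 0 < p) (h1 : (0:ℝ) < 1 - b⁻¹ ^ 2 + 3 * b⁻¹ ^ 4)
    (hP3 : (0:ℝ) < -b⁻¹ + b⁻¹ ^ 3 - 3 * b⁻¹ ^ 5) :
    (2 - 12 * b⁻¹ ^ 2 - 15 * b⁻¹ ^ 4) / (2 * (1 - b⁻¹ ^ 2 + 3 * b⁻¹ ^ 4))
      = (p * (-2 * b⁻¹ ^ 3 + 12 * b⁻¹ ^ 5 + 15 * b⁻¹ ^ 7) * b ^ 2) /
          (2 * (p * (-b⁻¹ + b⁻¹ ^ 3 - 3 * b⁻¹ ^ 5))) := by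
  rw [div_eq_div_iff (by positivity) (by positivity)]
  field_simp
  ring

lemma aux_eq2 (b p : ℝ) (hb : b ≠ 0) (hp : 0 < p)
    (h2 : (0:ℝ) < 1 - b⁻¹ ^ 2 + 3 * b⁻¹ ^ 4 - 15 * b⁻¹ ^ 6)
    (hP4 : (0:ℝ) < -b⁻¹ + b⁻¹ ^ 3 - 3 * b⁻¹ ^ 5 + 15 * b⁻¹ ^ 7) :
    (p * (-2 * b⁻¹ ^ 3 - 3 * b⁻¹ ^ 5) * b ^ 2) /
        (2 * (p * (-b⁻¹ + b⁻¹ ^ 3 - 3 * b⁻¹ ^ 5 + 15 * b⁻¹ ^ 7)))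
      = (2 + 3 * b⁻¹ ^ 2) / (2 * (1 - b⁻¹ ^ 2 + 3 * b⁻¹ ^ 4 - 15 * b⁻¹ ^ 6)) := by
  rw [div_eq_div_iff (by positivity) (by positivity)]
  field_simp
  ring

set_option maxHeartbeats 2000000 in
theorem stmt_3 :
    Tendsto (fun b : ℝ => ((b ^ 2 + 1) * Phi b - |b| * phi b) / (2 * Phi b / b ^ 2))
      atBot (nhds 1) := by
  have hlo : Tendsto (fun b : ℝ => (2 - 12 * b⁻¹ ^ 2 - 15 * b⁻¹ ^ 4) /
      (2 * (1 - b⁻¹ ^ 2 + 3 * b⁻¹ ^ 4))) atBot (nhds 1) := by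
    have hnum := (tendsto_const_nhds (α := ℝ) (x := (2:ℝ)) (f := atBot)).sub
      ((tendsto_inv'.pow 2).const_mul 12) |>.sub ((tendsto_inv'.pow 4).const_mul 15)
    have hden := ((tendsto_const_nhds (α := ℝ) (x := (1:ℝ)) (f := atBot)).sub
      (tendsto_inv'.pow 2)).add ((tendsto_inv'.pow 4).const_mul 3) |>.const_mul (2:ℝ)
    have h := hnum.div hden (by norm_num)
    convert h using 2
    all_goals norm_num
  have hhi : Tendsto (fun b : ℝ => (2 + 3 * b⁻¹ ^ 2) /
      (2 * (1 - b⁻¹ ^ 2 + 3 * b⁻¹ ^ 4 - 15 * b⁻¹ ^ 6))) atBot (nhds 1) := by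
    have hnum := (tendsto_const_nhds (α := ℝ) (x := (2:ℝ)) (f := atBot)).add
      ((tendsto_inv'.pow 2).const_mul 3)
    have hden := (((tendsto_const_nhds (α := ℝ) (x := (1:ℝ)) (f := atBot)).sub
      (tendsto_inv'.pow 2)).add ((tendsto_inv'.pow 4).const_mul 3)).sub
      ((tendsto_inv'.pow 6).const_mul 15) |>.const_mul (2:ℝ)
    have h := hnum.div hden (by norm_num)
    convert h using 2
    all_goals norm_num
  refine tendsto_of_tendsto_of_tendsto_of_le_of_le' hlo hhi ?_ ?_
  · -- lower bound
    filter_upwards [eventually_le_atBot (-3:ℝ)] with b hb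
    have hb0 : b < 0 := lt_of_le_of_lt hb (by norm_num)
    have hbne : b ≠ 0 := ne_of_lt hb0
    have hx0 : b⁻¹ < 0 := inv_lt_zero.mpr hb0
    have hxinv : b * b⁻¹ = 1 := mul_inv_cancel₀ hbne
    have hx3 : -(1/3 : ℝ) ≤ b⁻¹ := by nlinarith
    have hx2 : b⁻¹ ^ 2 ≤ 1/9 := by nlinarith
    have hx2p : 0 < b⁻¹ ^ 2 := by positivity
    have hx3p : 0 < -b⁻¹ ^ 3 := by nlinarith [mul_pos (neg_pos.2 hx0) hx2p]
    have hφ := phi_pos b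
    have hU := U_nonneg b hb
    have hL := L_nonneg b hb
    have h1 : (0:ℝ) < 1 - b⁻¹ ^ 2 + 3 * b⁻¹ ^ 4 := by nlinarith [sq_nonneg (b⁻¹ ^ 2)]
    have h2 : (0:ℝ) < 1 - b⁻¹ ^ 2 + 3 * b⁻¹ ^ 4 - 15 * b⁻¹ ^ 6 := by
      nlinarith [mul_nonneg (sq_nonneg b⁻¹) (by linarith : (0:ℝ) ≤ 1/9 - b⁻¹ ^ 2),
        mul_nonneg (sq_nonneg (b⁻¹ ^ 2)) (by linarith : (0:ℝ) ≤ 1/9 - b⁻¹ ^ 2)]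
    have hP3pos : 0 < -b⁻¹ + b⁻¹ ^ 3 - 3 * b⁻¹ ^ 5 := by
      nlinarith [mul_pos (neg_pos.2 hx0) h1]
    have hP4pos : 0 < -b⁻¹ + b⁻¹ ^ 3 - 3 * b⁻¹ ^ 5 + 15 * b⁻¹ ^ 7 := by
      nlinarith [mul_pos (neg_pos.2 hx0) h2]
    have haux : (0:ℝ) < 2 - 12 * b⁻¹ ^ 2 - 15 * b⁻¹ ^ 4 := by
      nlinarith [mul_nonneg (sq_nonneg b⁻¹) (by linarith : (0:ℝ) ≤ 1/9 - b⁻¹ ^ 2)]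
    have hnlo : 0 < -2 * b⁻¹ ^ 3 + 12 * b⁻¹ ^ 5 + 15 * b⁻¹ ^ 7 := by
      nlinarith [mul_pos hx3p haux]
    have hΦpos : 0 < Phi b :=
      lt_of_lt_of_le (mul_pos hφ hP4pos) hL
    have hNlo : phi b * (-2 * b⁻¹ ^ 3 + 12 * b⁻¹ ^ 5 + 15 * b⁻¹ ^ 7)
        ≤ (b ^ 2 + 1) * Phi b + b * phi b := by
      have h := mul_le_mul_of_nonneg_left hL (by positivity : (0:ℝ) ≤ b ^ 2 + 1)
      have hid := aux_id1 b (phi b) hbne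
      linarith
    have hRR : ((b ^ 2 + 1) * Phi b - |b| * phi b) / (2 * Phi b / b ^ 2)
        = (((b ^ 2 + 1) * Phi b + b * phi b) * b ^ 2) / (2 * Phi b) := by
      rw [abs_of_neg hb0, div_div_eq_mul_div]
      ring
    rw [hRR]
    calc (2 - 12 * b⁻¹ ^ 2 - 15 * b⁻¹ ^ 4) / (2 * (1 - b⁻¹ ^ 2 + 3 * b⁻¹ ^ 4))
        = (phi b * (-2 * b⁻¹ ^ 3 + 12 * b⁻¹ ^ 5 + 15 * b⁻¹ ^ 7) * b ^ 2) /
            (2 * (phi b * (-b⁻¹ + b⁻¹ ^ 3 - 3 * b⁻¹ ^ 5))) :=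
          aux_eq1 b (phi b) hbne hφ h1 hP3pos
      _ ≤ (phi b * (-2 * b⁻¹ ^ 3 + 12 * b⁻¹ ^ 5 + 15 * b⁻¹ ^ 7) * b ^ 2) / (2 * Phi b) := by
          gcongr
      _ ≤ (((b ^ 2 + 1) * Phi b + b * phi b) * b ^ 2) / (2 * Phi b) := by
          gcongr
  · -- upper bound
    filter_upwards [eventually_le_atBot (-3:ℝ)] with b hb
    have hb0 : b < 0 := lt_of_le_of_lt hb (by norm_num)
    have hbne : b ≠ 0 := ne_of_lt hb0
    have hx0 : b⁻¹ < 0 := inv_lt_zero.mpr hb0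
    have hxinv : b * b⁻¹ = 1 := mul_inv_cancel₀ hbne
    have hx3 : -(1/3 : ℝ) ≤ b⁻¹ := by nlinarith
    have hx2 : b⁻¹ ^ 2 ≤ 1/9 := by nlinarith
    have hx2p : 0 < b⁻¹ ^ 2 := by positivity
    have hx3p : 0 < -b⁻¹ ^ 3 := by nlinarith [mul_pos (neg_pos.2 hx0) hx2p]
    have hφ := phi_pos b
    have hU := U_nonneg b hb
    have hL := L_nonneg b hb
    have h1 : (0:ℝ) < 1 - b⁻¹ ^ 2 + 3 * b⁻¹ ^ 4 := by nlinarith [sq_nonneg (b⁻¹ ^ 2)]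
    have h2 : (0:ℝ) < 1 - b⁻¹ ^ 2 + 3 * b⁻¹ ^ 4 - 15 * b⁻¹ ^ 6 := by
      nlinarith [mul_nonneg (sq_nonneg b⁻¹) (by linarith : (0:ℝ) ≤ 1/9 - b⁻¹ ^ 2),
        mul_nonneg (sq_nonneg (b⁻¹ ^ 2)) (by linarith : (0:ℝ) ≤ 1/9 - b⁻¹ ^ 2)]
    have hP3pos : 0 < -b⁻¹ + b⁻¹ ^ 3 - 3 * b⁻¹ ^ 5 := by
      nlinarith [mul_pos (neg_pos.2 hx0) h1]
    have hP4pos : 0 < -b⁻¹ + b⁻¹ ^ 3 - 3 * b⁻¹ ^ 5 + 15 * b⁻¹ ^ 7 := by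
      nlinarith [mul_pos (neg_pos.2 hx0) h2]
    have haux : (0:ℝ) < 2 + 3 * b⁻¹ ^ 2 := by nlinarith
    have hnhi : 0 < -2 * b⁻¹ ^ 3 - 3 * b⁻¹ ^ 5 := by
      nlinarith [mul_pos hx3p haux]
    have hΦpos : 0 < Phi b :=
      lt_of_lt_of_le (mul_pos hφ hP4pos) hL
    have hNhi : (b ^ 2 + 1) * Phi b + b * phi b
        ≤ phi b * (-2 * b⁻¹ ^ 3 - 3 * b⁻¹ ^ 5) := by
      have h := mul_le_mul_of_nonneg_left hU (by positivity : (0:ℝ) ≤ b ^ 2 + 1)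
      have hid := aux_id2 b (phi b) hbne
      linarith
    have hRR : ((b ^ 2 + 1) * Phi b - |b| * phi b) / (2 * Phi b / b ^ 2)
        = (((b ^ 2 + 1) * Phi b + b * phi b) * b ^ 2) / (2 * Phi b) := by
      rw [abs_of_neg hb0, div_div_eq_mul_div]
      ring
    rw [hRR]
    calc (((b ^ 2 + 1) * Phi b + b * phi b) * b ^ 2) / (2 * Phi b)
        ≤ (phi b * (-2 * b⁻¹ ^ 3 - 3 * b⁻¹ ^ 5) * b ^ 2) / (2 * Phi b) := by
          gcongr
      _ ≤ (phi b * (-2 * b⁻¹ ^ 3 - 3 * b⁻¹ ^ 5) * b ^ 2) /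
            (2 * (phi b * (-b⁻¹ + b⁻¹ ^ 3 - 3 * b⁻¹ ^ 5 + 15 * b⁻¹ ^ 7))) := by
          gcongr
      _ = (2 + 3 * b⁻¹ ^ 2) / (2 * (1 - b⁻¹ ^ 2 + 3 * b⁻¹ ^ 4 - 15 * b⁻¹ ^ 6)) :=
          aux_eq2 b (phi b) hbne hφ h2 hP4pos
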